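/- Let ε > 0, α > 0, k > 0, z > 0, V ≥ 0, and let S ≥ 0 satisfy S² ≥ 4·α·(V + z + k·S). Then D(V, S) ≥ (ε/2)·erfi(S/√(4·α·(V + z + k·S))), where D(V, S) = ε·erfi(S/√(4·α·(V + z + k·S))) − (ε·k·√α/(2·√(V + z + k·S)))·exp(S²/(4·α·(V + z + k·S))). -/

import Mathlib

/-- The imaginary error function, `erfi x = ∫ u in 0..x, exp (u²)`
(the conventional erfi scaled by `√π / 2`). -/
noncomputable def erfi (x : ℝ) : ℝ := ∫ u in (0:ℝ)..x, Real.exp (u ^ 2)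

/-- `D(V, S)`, the partial derivative in `S` of the shifted potential
`Φ(V, S) = φ(V + z + k·S, S)`. -/
noncomputable def Dfun (ε α k z V S : ℝ) : ℝ :=
  ε * erfi (S / Real.sqrt (4 * α * (V + z + k * S))) -
    ε * k * Real.sqrt α / (2 * Real.sqrt (V + z + k * S)) *
      Real.exp (S ^ 2 / (4 * α * (V + z + k * S)))

lemma cont_exp_sq : Continuous fun t : ℝ => Real.exp (t ^ 2) := by continuity

lemma hasDerivAt_erfi (u : ℝ) : HasDerivAt erfi (Real.exp (u ^ 2)) u :=
  intervalIntegral.integral_hasDerivAt_right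
    (cont_exp_sq.intervalIntegrable _ _)
    (cont_exp_sq.stronglyMeasurableAtFilter _ _) cont_exp_sq.continuousAt

lemma hasDerivAt_aux (u : ℝ) (hu : u ≠ 0) :
    HasDerivAt (fun t : ℝ => erfi t - Real.exp (t ^ 2) / (2 * t))
      (Real.exp (u ^ 2) / (2 * u ^ 2)) u := by
  have h1 : HasDerivAt (fun t : ℝ => t ^ 2) (2 * u) u := by
    simpa using hasDerivAt_pow 2 u
  have h2 : HasDerivAt (fun t : ℝ => Real.exp (t ^ 2)) (Real.exp (u ^ 2) * (2 * u)) u :=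
    (Real.hasDerivAt_exp _).comp u h1
  have h3 : HasDerivAt (fun t : ℝ => (2 : ℝ) * t) 2 u := by
    simpa using (hasDerivAt_id u).const_mul (2 : ℝ)
  have h4 := h2.div h3 (by simpa using hu)
  have h5 := (hasDerivAt_erfi u).sub h4
  refine h5.congr_deriv ?_
  field_simp
  ring

lemma erfi_one_ge : (83 : ℝ) / 60 ≤ erfi 1 := by
  have hpt : ∀ u ∈ Set.Icc (0:ℝ) 1, 1 + u ^ 2 + u ^ 4 / 4 ≤ Real.exp (u ^ 2) := by
    intro u _
    have h := Real.add_one_le_exp (u ^ 2 / 2)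
    have h2 : Real.exp (u ^ 2 / 2) ^ 2 = Real.exp (u ^ 2) := by
      rw [← Real.exp_nat_mul]; ring_nf
    nlinarith [Real.exp_pos (u ^ 2 / 2), sq_nonneg u]
  have hint : (∫ u in (0:ℝ)..1, (1 + u ^ 2 + u ^ 4 / 4)) ≤ erfi 1 := by
    apply intervalIntegral.integral_mono_on (by norm_num)
    · exact (Continuous.intervalIntegrable (by continuity) _ _)
    · exact cont_exp_sq.intervalIntegrable _ _
    · exact hpt
  have hval : (∫ u in (0:ℝ)..1, (1 + u ^ 2 + u ^ 4 / 4)) = 83 / 60 := by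
    norm_num
  linarith [hint, hval.symm.le]

lemma erfi_ge (x : ℝ) (hx : 1 ≤ x) : Real.exp (x ^ 2) / (2 * x) ≤ erfi x := by
  have mono : MonotoneOn (fun t : ℝ => erfi t - Real.exp (t ^ 2) / (2 * t)) (Set.Ici 1) := by
    apply monotoneOn_of_deriv_nonneg (convex_Ici 1)
    · intro u hu
      have hu0 : u ≠ 0 := by simp at hu; linarith
      exact (hasDerivAt_aux u hu0).continuousAt.continuousWithinAt
    · intro u hu
      rw [interior_Ici] at hu
      have hu0 : u ≠ 0 := by simp at hu; linarith
      exact (hasDerivAt_aux u hu0).differentiableAt.differentiableWithinAt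
    · intro u hu
      rw [interior_Ici] at hu
      have hu0 : u ≠ 0 := by simp at hu; linarith
      rw [(hasDerivAt_aux u hu0).deriv]
      positivity
  have h1 := mono (by simp) (by simpa using hx) hx
  simp only at h1
  have he : Real.exp 1 < 2.7182818286 := Real.exp_one_lt_d9
  have h2 := erfi_one_ge
  norm_num at h1
  nlinarith

/-- For large `S` (namely `S² ≥ 4α(V + z + kS)`), the derivative of the shifted
potential is at least half of its erfi part. -/
theorem Dfun_ge_half_erfi (ε α k z V S : ℝ)
    (hε : 0 < ε) (hα : 0 < α) (hk : 0 < k) (hz : 0 < z) (hV : 0 ≤ V) (hS : 0 ≤ S)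
    (hlarge : S ^ 2 ≥ 4 * α * (V + z + k * S)) :
    Dfun ε α k z V S ≥
      ε / 2 * erfi (S / Real.sqrt (4 * α * (V + z + k * S))) := by
  have hkS : 0 ≤ k * S := mul_nonneg hk.le hS
  have hW : 0 < V + z + k * S := by linarith
  have hA : 0 < 4 * α * (V + z + k * S) := by positivity
  have hS0 : 0 < S := by nlinarith
  set W := V + z + k * S with hWdef
  have hsqA : Real.sqrt (4 * α * W) = 2 * Real.sqrt α * Real.sqrt W := by
    rw [show (4:ℝ) * α * W = 4 * (α * W) by ring, Real.sqrt_mul (by norm_num),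
      Real.sqrt_mul hα.le, show Real.sqrt 4 = 2 by
        rw [show (4:ℝ) = 2 ^ 2 by norm_num, Real.sqrt_sq (by norm_num)]]
    ring
  set x := S / Real.sqrt (4 * α * W) with hxdef
  have hsA : 0 < Real.sqrt (4 * α * W) := Real.sqrt_pos.mpr hA
  have hx1 : 1 ≤ x := by
    rw [hxdef, le_div_iff₀ hsA, one_mul]
    calc Real.sqrt (4 * α * W) ≤ Real.sqrt (S ^ 2) := Real.sqrt_le_sqrt hlarge
    _ = S := Real.sqrt_sq hS
  have hx2 : S ^ 2 / (4 * α * W) = x ^ 2 := by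
    rw [hxdef, div_pow, Real.sq_sqrt hA.le]
  have hsW : 0 < Real.sqrt W := Real.sqrt_pos.mpr hW
  have hsα : 0 < Real.sqrt α := Real.sqrt_pos.mpr hα
  have hWsq : Real.sqrt W ^ 2 = W := Real.sq_sqrt hW.le
  have hE : 0 < Real.exp (x ^ 2) := Real.exp_pos _
  have hkSW : k * S ≤ W := by rw [hWdef]; linarith
  have key : ε * k * Real.sqrt α / (2 * Real.sqrt W) * Real.exp (x ^ 2) ≤
      ε / 2 * (Real.exp (x ^ 2) / (2 * x)) := by
    have h2x : 2 * x = S / (Real.sqrt α * Real.sqrt W) := by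
      rw [hxdef, hsqA]; field_simp
    rw [h2x]
    calc ε * k * Real.sqrt α / (2 * Real.sqrt W) * Real.exp (x ^ 2)
        = ε * k * Real.sqrt α * Real.exp (x ^ 2) / (2 * Real.sqrt W) := by ring
      _ ≤ ε * (Real.exp (x ^ 2) * (Real.sqrt α * Real.sqrt W)) / (2 * S) := by
          rw [div_le_div_iff₀ (by positivity) (by positivity)]
          nlinarith [mul_nonneg (mul_nonneg (mul_nonneg hε.le hE.le) hsα.le)
            (sub_nonneg.mpr hkSW), hWsq]
      _ = ε / 2 * (Real.exp (x ^ 2) / (S / (Real.sqrt α * Real.sqrt W))) := by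
          field_simp
  have key2 : ε / 2 * (Real.exp (x ^ 2) / (2 * x)) ≤ ε / 2 * erfi x :=
    mul_le_mul_of_nonneg_left (erfi_ge x hx1) (by positivity)
  show ε * erfi x - ε * k * Real.sqrt α / (2 * Real.sqrt W) * Real.exp (S ^ 2 / (4 * α * W)) ≥
      ε / 2 * erfi x
  rw [hx2]
  linarith
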